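/- Assume the model is normal. Then the kernel of the linearized collision operator L equals the span of the d+2 vectors R^{1/2}, R^{1/2}·p^1, …, R^{1/2}·p^d, R^{1/2}·|p|², where R^{1/2} = (R_1^{1/2},…,R_N^{1/2}), products are taken componentwise, p^i = (p_1^i,…,p_N^i), and |p|² = (|p_1|²,…,|p_N|²). Equivalently, Lf = 0 if and only if f_i = R_i^{1/2} φ_i for some collision invariant φ. -/
import Mathlib


open Real Finset Filter Set

noncomputable def Psi (α y : ℝ) : ℝ :=
  (1 - α * y) ^ α * (1 + (1 - α) * y) ^ (1 - α)

noncomputable def Qop {N : ℕ} (α : ℝ) (Γ : Fin N → Fin N → Fin N → Fin N → ℝ)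
    (F : Fin N → ℝ) : Fin N → ℝ := fun i =>
  ∑ j, ∑ k, ∑ l, Γ i j k l *
    (F k * F l * Psi α (F i) * Psi α (F j) - F i * F j * Psi α (F k) * Psi α (F l))

def dotN {N : ℕ} (u v : Fin N → ℝ) : ℝ := ∑ i, u i * v i

def GammaOK {N d : ℕ} (p : Fin N → Fin d → ℝ)
    (Γ : Fin N → Fin N → Fin N → Fin N → ℝ) : Prop :=
  (∀ i j k l, 0 ≤ Γ i j k l) ∧
  (∀ i j k l, Γ i j k l = Γ j i k l) ∧
  (∀ i j k l, Γ i j k l = Γ k l i j) ∧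
  (∀ i j k l, Γ i j k l ≠ 0 →
    (∀ m, p i m + p j m = p k m + p l m) ∧
    (∑ m, (p i m) ^ 2) + (∑ m, (p j m) ^ 2) = (∑ m, (p k m) ^ 2) + (∑ m, (p l m) ^ 2))

def IsCollInv {N : ℕ} (Γ : Fin N → Fin N → Fin N → Fin N → ℝ) (φ : Fin N → ℝ) : Prop :=
  ∀ i j k l, Γ i j k l ≠ 0 → φ i + φ j = φ k + φ l

def IsNormal {N d : ℕ} (p : Fin N → Fin d → ℝ)
    (Γ : Fin N → Fin N → Fin N → Fin N → ℝ) : Prop :=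
  ∀ φ : Fin N → ℝ, IsCollInv Γ φ →
    ∃ (a c : ℝ) (b : Fin d → ℝ), ∀ i, φ i = a + (∑ m, b m * p i m) + c * ∑ m, (p i m) ^ 2

def IsEquilib {N d : ℕ} (α : ℝ) (p : Fin N → Fin d → ℝ) (P : Fin N → ℝ) : Prop :=
  (∀ i, 0 < P i ∧ P i < 1 / α) ∧
  ∃ (K : ℝ) (b : Fin d → ℝ) (c : ℝ), 0 < K ∧
    ∀ i, P i / Psi α (P i) = K * Real.exp (-(∑ m, b m * p i m) - c * ∑ m, (p i m) ^ 2)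

noncomputable def muF (α y : ℝ) : ℝ :=
  y * Real.log y + (1 - α * y) * Real.log (1 - α * y)
    - (1 + (1 - α) * y) * Real.log (1 + (1 - α) * y)

noncomputable def Rfun {N : ℕ} (α : ℝ) (P : Fin N → ℝ) (i : Fin N) : ℝ :=
  P i * (1 - α * P i) * (1 + (1 - α) * P i)

noncomputable def Pcoef {N : ℕ} (α : ℝ) (P : Fin N → ℝ) (i j k l : Fin N) : ℝ :=
  P i * P j * Psi α (P k) * Psi α (P l) / Real.sqrt (Rfun α P i)

noncomputable def Lop {N : ℕ} (α : ℝ) (Γ : Fin N → Fin N → Fin N → Fin N → ℝ)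
    (P : Fin N → ℝ) (f : Fin N → ℝ) : Fin N → ℝ := fun i =>
  ∑ j, ∑ k, ∑ l, Γ i j k l / Real.sqrt (Rfun α P i) *
    (Pcoef α P i j k l * f i + Pcoef α P j i k l * f j
      - Pcoef α P k l i j * f k - Pcoef α P l k i j * f l)

noncomputable def Scoef {N : ℕ} (α : ℝ) (P : Fin N → ℝ) (i j k l : Fin N) : ℝ :=
  P i * P j * Psi α (P k) * Psi α (P l)

section core
variable {N d : ℕ} {α : ℝ} {p : Fin N → Fin d → ℝ}
  {Γ : Fin N → Fin N → Fin N → Fin N → ℝ} {P : Fin N → ℝ}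

lemma Rfun_pos (hα0 : 0 < α) (hα1 : α < 1) (hP : IsEquilib α p P) (i : Fin N) :
    0 < Rfun α P i := by
  obtain ⟨h1, h2⟩ := hP.1 i
  have h3 : P i * α < 1 := (lt_div_iff₀ hα0).mp h2
  have h4 : 0 < 1 - α * P i := by nlinarith
  have h5 : 0 < 1 + (1 - α) * P i := by nlinarith
  exact mul_pos (mul_pos h1 h4) h5

lemma sqrtR_pos (hα0 : 0 < α) (hα1 : α < 1) (hP : IsEquilib α p P) (i : Fin N) :
    0 < Real.sqrt (Rfun α P i) := Real.sqrt_pos.mpr (Rfun_pos hα0 hα1 hP i)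

lemma Psi_pos (hα0 : 0 < α) (hα1 : α < 1) (hP : IsEquilib α p P) (i : Fin N) :
    0 < Psi α (P i) := by
  obtain ⟨h1, h2⟩ := hP.1 i
  have h3 : P i * α < 1 := (lt_div_iff₀ hα0).mp h2
  have h4 : 0 < 1 - α * P i := by nlinarith
  have h5 : 0 < 1 + (1 - α) * P i := by nlinarith
  exact mul_pos (Real.rpow_pos_of_pos h4 α) (Real.rpow_pos_of_pos h5 (1 - α))

lemma Scoef_pos (hα0 : 0 < α) (hα1 : α < 1) (hP : IsEquilib α p P) (i j k l : Fin N) :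
    0 < Scoef α P i j k l :=
  mul_pos (mul_pos (mul_pos (hP.1 i).1 (hP.1 j).1) (Psi_pos hα0 hα1 hP k))
    (Psi_pos hα0 hα1 hP l)

lemma detailed_balance (hα0 : 0 < α) (hα1 : α < 1) (hΓ : GammaOK p Γ)
    (hP : IsEquilib α p P) {i j k l : Fin N} (hne : Γ i j k l ≠ 0) :
    Scoef α P i j k l = Scoef α P k l i j := by
  obtain ⟨K, b, c, hK, heq⟩ := hP.2
  obtain ⟨hmom, hen⟩ := hΓ.2.2.2 i j k l hne
  have hb : (∑ m, b m * p i m) + ∑ m, b m * p j m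
      = (∑ m, b m * p k m) + ∑ m, b m * p l m := by
    rw [← Finset.sum_add_distrib, ← Finset.sum_add_distrib]
    exact Finset.sum_congr rfl fun m _ => by rw [← mul_add, ← mul_add, hmom m]
  have hEE : (-(∑ m, b m * p i m) - c * ∑ m, (p i m) ^ 2)
      + (-(∑ m, b m * p j m) - c * ∑ m, (p j m) ^ 2)
      = (-(∑ m, b m * p k m) - c * ∑ m, (p k m) ^ 2)
      + (-(∑ m, b m * p l m) - c * ∑ m, (p l m) ^ 2) := by
    have hc : c * (∑ m, (p i m) ^ 2) + c * (∑ m, (p j m) ^ 2)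
        = c * (∑ m, (p k m) ^ 2) + c * (∑ m, (p l m) ^ 2) := by
      rw [← mul_add, ← mul_add, hen]
    linarith
  have key : (P i / Psi α (P i)) * (P j / Psi α (P j))
      = (P k / Psi α (P k)) * (P l / Psi α (P l)) := by
    rw [heq i, heq j, heq k, heq l]
    have hee : Real.exp ((-(∑ m, b m * p i m) - c * ∑ m, (p i m) ^ 2))
        * Real.exp ((-(∑ m, b m * p j m) - c * ∑ m, (p j m) ^ 2))
        = Real.exp ((-(∑ m, b m * p k m) - c * ∑ m, (p k m) ^ 2))
        * Real.exp ((-(∑ m, b m * p l m) - c * ∑ m, (p l m) ^ 2)) := by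
      rw [← Real.exp_add, ← Real.exp_add, hEE]
    linear_combination (K * K) * hee
  have h1 := ne_of_gt (Psi_pos hα0 hα1 hP i)
  have h2 := ne_of_gt (Psi_pos hα0 hα1 hP j)
  have h3 := ne_of_gt (Psi_pos hα0 hα1 hP k)
  have h4 := ne_of_gt (Psi_pos hα0 hα1 hP l)
  field_simp at key
  show P i * P j * Psi α (P k) * Psi α (P l) = P k * P l * Psi α (P i) * Psi α (P j)
  linear_combination key
end core

noncomputable def gfun {N : ℕ} (α : ℝ) (Γ : Fin N → Fin N → Fin N → Fin N → ℝ)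
    (P : Fin N → ℝ) (φ : Fin N → ℝ) (i j k l : Fin N) : ℝ :=
  Γ i j k l * Scoef α P i j k l * (φ i + φ j - φ k - φ l)

section core2
variable {N d : ℕ} {α : ℝ} {p : Fin N → Fin d → ℝ}
  {Γ : Fin N → Fin N → Fin N → Fin N → ℝ} {P : Fin N → ℝ}

lemma term_eq (hα0 : 0 < α) (hα1 : α < 1) (hΓ : GammaOK p Γ) (hP : IsEquilib α p P)
    (f : Fin N → ℝ) (i j k l : Fin N) :
    Γ i j k l / Real.sqrt (Rfun α P i) *
      (Pcoef α P i j k l * f i + Pcoef α P j i k l * f j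
        - Pcoef α P k l i j * f k - Pcoef α P l k i j * f l)
    = (Real.sqrt (Rfun α P i))⁻¹ *
        gfun α Γ P (fun x => f x / Real.sqrt (Rfun α P x)) i j k l := by
  have hqi := (sqrtR_pos hα0 hα1 hP i).ne'
  have hqj := (sqrtR_pos hα0 hα1 hP j).ne'
  have hqk := (sqrtR_pos hα0 hα1 hP k).ne'
  have hql := (sqrtR_pos hα0 hα1 hP l).ne'
  have halg : Γ i j k l / Real.sqrt (Rfun α P i) *
      (Pcoef α P i j k l * f i + Pcoef α P j i k l * f j
        - Pcoef α P k l i j * f k - Pcoef α P l k i j * f l)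
      = (Real.sqrt (Rfun α P i))⁻¹ * (Γ i j k l *
          (Scoef α P i j k l * (f i / Real.sqrt (Rfun α P i) + f j / Real.sqrt (Rfun α P j))
          - Scoef α P k l i j * (f k / Real.sqrt (Rfun α P k) + f l / Real.sqrt (Rfun α P l)))) := by
    simp only [Pcoef, Scoef]
    field_simp
    ring
  by_cases hne : Γ i j k l = 0
  · simp [gfun, hne, halg]
  · have hdb := detailed_balance hα0 hα1 hΓ hP hne
    rw [halg, gfun, ← hdb]
    ring

lemma Lop_eq (hα0 : 0 < α) (hα1 : α < 1) (hΓ : GammaOK p Γ) (hP : IsEquilib α p P)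
    (f : Fin N → ℝ) (i : Fin N) :
    Lop α Γ P f i = (Real.sqrt (Rfun α P i))⁻¹ *
      ∑ j, ∑ k, ∑ l, gfun α Γ P (fun x => f x / Real.sqrt (Rfun α P x)) i j k l := by
  simp only [Lop]
  rw [Finset.mul_sum]
  refine Finset.sum_congr rfl fun j _ => ?_
  rw [Finset.mul_sum]
  refine Finset.sum_congr rfl fun k _ => ?_
  rw [Finset.mul_sum]
  exact Finset.sum_congr rfl fun l _ => term_eq hα0 hα1 hΓ hP f i j k l

lemma gfun_swap12 (hΓ : GammaOK p Γ) (φ : Fin N → ℝ) (i j k l : Fin N) :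
    gfun α Γ P φ j i k l = gfun α Γ P φ i j k l := by
  simp only [gfun, Scoef, ← hΓ.2.1 i j k l]
  ring

lemma gfun_pairswap (hα0 : 0 < α) (hα1 : α < 1) (hΓ : GammaOK p Γ)
    (hP : IsEquilib α p P) (φ : Fin N → ℝ) (i j k l : Fin N) :
    gfun α Γ P φ k l i j = - gfun α Γ P φ i j k l := by
  by_cases hne : Γ i j k l = 0
  · have h2 : Γ k l i j = 0 := (hΓ.2.2.1 k l i j).trans hne
    simp [gfun, hne, h2]
  · have hdb := detailed_balance hα0 hα1 hΓ hP hne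
    rw [gfun, gfun, (hΓ.2.2.1 k l i j : Γ k l i j = Γ i j k l), ← hdb]
    ring
end core2

section sums
lemma sum4_swap12 {N : ℕ} (F : Fin N → Fin N → Fin N → Fin N → ℝ) :
    (∑ i, ∑ j, ∑ k, ∑ l, F i j k l) = ∑ i, ∑ j, ∑ k, ∑ l, F j i k l :=
  Finset.sum_comm

lemma sum4_pairswap {N : ℕ} (F : Fin N → Fin N → Fin N → Fin N → ℝ) :
    (∑ i, ∑ j, ∑ k, ∑ l, F i j k l) = ∑ i, ∑ j, ∑ k, ∑ l, F k l i j := by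
  calc (∑ i, ∑ j, ∑ k, ∑ l, F i j k l)
      = ∑ i, ∑ k, ∑ j, ∑ l, F i j k l :=
        Finset.sum_congr rfl fun i _ => Finset.sum_comm
    _ = ∑ k, ∑ i, ∑ j, ∑ l, F i j k l := Finset.sum_comm
    _ = ∑ k, ∑ i, ∑ l, ∑ j, F i j k l :=
        Finset.sum_congr rfl fun k _ => Finset.sum_congr rfl fun i _ => Finset.sum_comm
    _ = ∑ k, ∑ l, ∑ i, ∑ j, F i j k l :=
        Finset.sum_congr rfl fun k _ => Finset.sum_comm

lemma sum4_eq_zero {N : ℕ} (F : Fin N → Fin N → Fin N → Fin N → ℝ)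
    (h0 : ∀ i j k l, 0 ≤ F i j k l)
    (hsum : (∑ i, ∑ j, ∑ k, ∑ l, F i j k l) = 0) : ∀ i j k l, F i j k l = 0 := by
  intro i j k l
  have h1 : ∀ i ∈ Finset.univ, (∑ j, ∑ k, ∑ l, F i j k l) = 0 :=
    (Finset.sum_eq_zero_iff_of_nonneg (fun i _ => Finset.sum_nonneg fun j _ =>
      Finset.sum_nonneg fun k _ => Finset.sum_nonneg fun l _ => h0 i j k l)).mp hsum
  have h2 : ∀ j ∈ Finset.univ, (∑ k, ∑ l, F i j k l) = 0 :=
    (Finset.sum_eq_zero_iff_of_nonneg (fun j _ => Finset.sum_nonneg fun k _ =>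
      Finset.sum_nonneg fun l _ => h0 i j k l)).mp (h1 i (Finset.mem_univ i))
  have h3 : ∀ k ∈ Finset.univ, (∑ l, F i j k l) = 0 :=
    (Finset.sum_eq_zero_iff_of_nonneg (fun k _ => Finset.sum_nonneg fun l _ =>
      h0 i j k l)).mp (h2 j (Finset.mem_univ j))
  exact (Finset.sum_eq_zero_iff_of_nonneg (fun l _ => h0 i j k l)).mp
    (h3 k (Finset.mem_univ k)) l (Finset.mem_univ l)
end sums

section key
variable {N d : ℕ} {α : ℝ} {p : Fin N → Fin d → ℝ}
  {Γ : Fin N → Fin N → Fin N → Fin N → ℝ} {P : Fin N → ℝ}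

lemma key_iff (hα0 : 0 < α) (hα1 : α < 1) (hΓ : GammaOK p Γ) (hP : IsEquilib α p P)
    (f : Fin N → ℝ) :
    Lop α Γ P f = 0 ↔ IsCollInv Γ (fun x => f x / Real.sqrt (Rfun α P x)) := by
  set φ : Fin N → ℝ := fun x => f x / Real.sqrt (Rfun α P x) with hφ
  constructor
  · intro h
    -- T = 0
    have hT : (∑ i, ∑ j, ∑ k, ∑ l, gfun α Γ P φ i j k l * φ i) = 0 := by
      have hterm : ∀ i, (∑ j, ∑ k, ∑ l, gfun α Γ P φ i j k l * φ i)
          = f i * Lop α Γ P f i := by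
        intro i
        rw [Lop_eq hα0 hα1 hΓ hP f i, ← mul_assoc, ← hφ]
        have h1 : f i * (Real.sqrt (Rfun α P i))⁻¹ = φ i := (div_eq_mul_inv _ _).symm
        rw [h1, Finset.mul_sum]
        refine Finset.sum_congr rfl fun j _ => ?_
        rw [Finset.mul_sum]
        refine Finset.sum_congr rfl fun k _ => ?_
        rw [Finset.mul_sum]
        exact Finset.sum_congr rfl fun l _ => mul_comm _ _
      rw [Finset.sum_congr rfl fun i _ => hterm i]
      simp [h]
    have hTj : (∑ i, ∑ j, ∑ k, ∑ l, gfun α Γ P φ i j k l * φ j)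
        = ∑ i, ∑ j, ∑ k, ∑ l, gfun α Γ P φ i j k l * φ i := by
      rw [sum4_swap12 (fun i j k l => gfun α Γ P φ i j k l * φ j)]
      exact Finset.sum_congr rfl fun i _ => Finset.sum_congr rfl fun j _ =>
        Finset.sum_congr rfl fun k _ => Finset.sum_congr rfl fun l _ => by
          rw [gfun_swap12 hΓ]
    have hTk : (∑ i, ∑ j, ∑ k, ∑ l, gfun α Γ P φ i j k l * φ k)
        = -∑ i, ∑ j, ∑ k, ∑ l, gfun α Γ P φ i j k l * φ i := by
      rw [sum4_pairswap (fun i j k l => gfun α Γ P φ i j k l * φ k)]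
      rw [Finset.sum_congr rfl fun i _ => Finset.sum_congr rfl fun j _ =>
        Finset.sum_congr rfl fun k _ => Finset.sum_congr rfl fun l _ =>
          (by rw [gfun_pairswap hα0 hα1 hΓ hP]; ring :
            gfun α Γ P φ k l i j * φ i = -(gfun α Γ P φ i j k l * φ i))]
      simp only [Finset.sum_neg_distrib]
    have hTl : (∑ i, ∑ j, ∑ k, ∑ l, gfun α Γ P φ i j k l * φ l)
        = -∑ i, ∑ j, ∑ k, ∑ l, gfun α Γ P φ i j k l * φ i := by
      rw [sum4_pairswap (fun i j k l => gfun α Γ P φ i j k l * φ l)]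
      rw [Finset.sum_congr rfl fun i _ => Finset.sum_congr rfl fun j _ =>
        Finset.sum_congr rfl fun k _ => Finset.sum_congr rfl fun l _ =>
          (by rw [gfun_pairswap hα0 hα1 hΓ hP]; ring :
            gfun α Γ P φ k l i j * φ j = -(gfun α Γ P φ i j k l * φ j))]
      simp only [Finset.sum_neg_distrib]
      rw [hTj]
    have hquad : (∑ i, ∑ j, ∑ k, ∑ l,
        gfun α Γ P φ i j k l * (φ i + φ j - φ k - φ l)) = 0 := by
      simp only [mul_add, mul_sub, Finset.sum_add_distrib, Finset.sum_sub_distrib]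
      rw [hTj, hTk, hTl, hT]
      ring
    have hzero := sum4_eq_zero _ (fun i j k l => by
      have h1 := hΓ.1 i j k l
      have h2 := (Scoef_pos hα0 hα1 hP i j k l).le
      have h3 := sq_nonneg (φ i + φ j - φ k - φ l)
      simp only [gfun]
      rw [show Γ i j k l * Scoef α P i j k l * (φ i + φ j - φ k - φ l)
          * (φ i + φ j - φ k - φ l)
          = Γ i j k l * Scoef α P i j k l * (φ i + φ j - φ k - φ l) ^ 2 from by ring]
      exact mul_nonneg (mul_nonneg h1 h2) h3) hquad
    intro i j k l hne
    have hz := hzero i j k l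
    simp only [gfun] at hz
    have hpos : 0 < Γ i j k l * Scoef α P i j k l :=
      mul_pos (lt_of_le_of_ne (hΓ.1 i j k l) (Ne.symm hne)) (Scoef_pos hα0 hα1 hP i j k l)
    have hD : (φ i + φ j - φ k - φ l) = 0 := by
      rcases mul_eq_zero.mp hz with h5 | h5
      · rcases mul_eq_zero.mp h5 with h6 | h6
        · exact absurd h6 hpos.ne'
        · exact h6
      · exact h5
    show φ i + φ j = φ k + φ l
    linarith
  · intro hci
    funext i
    rw [Lop_eq hα0 hα1 hΓ hP f i, Pi.zero_apply]
    have hz : (∑ j, ∑ k, ∑ l, gfun α Γ P φ i j k l) = 0 := by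
      refine Finset.sum_eq_zero fun j _ => Finset.sum_eq_zero fun k _ =>
        Finset.sum_eq_zero fun l _ => ?_
      by_cases hne : Γ i j k l = 0
      · simp [gfun, hne]
      · have hD : φ i + φ j = φ k + φ l := hci i j k l hne
        simp only [gfun]
        rw [show φ i + φ j - φ k - φ l = 0 by linarith]
        ring
    rw [hz, mul_zero]
end key


section final
variable {N d : ℕ} {α : ℝ} {p : Fin N → Fin d → ℝ}
  {Γ : Fin N → Fin N → Fin N → Fin N → ℝ} {P : Fin N → ℝ}

theorem stmt19' (hN : 0 < N) (hd : 0 < d)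
    (hα0 : 0 < α) (hα1 : α < 1)
    (hΓ : GammaOK p Γ) (hnorm : IsNormal p Γ)
    (hP : IsEquilib α p P) :
    (∀ f : Fin N → ℝ, Lop α Γ P f = 0 ↔
      f ∈ Submodule.span ℝ
        (insert (fun i => Real.sqrt (Rfun α P i))
          (insert (fun i => Real.sqrt (Rfun α P i) * ∑ m, (p i m) ^ 2)
            (Set.range (fun m : Fin d => fun i => Real.sqrt (Rfun α P i) * p i m))))) ∧
    (∀ f : Fin N → ℝ, Lop α Γ P f = 0 ↔
      ∃ φ : Fin N → ℝ, IsCollInv Γ φ ∧ ∀ i, f i = Real.sqrt (Rfun α P i) * φ i) := by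
  have hsq : ∀ i, 0 < Real.sqrt (Rfun α P i) := sqrtR_pos hα0 hα1 hP
  have hcd : ∀ (x : Fin N) (y : ℝ),
      Real.sqrt (Rfun α P x) * y / Real.sqrt (Rfun α P x) = y :=
    fun x y => mul_div_cancel_left₀ y (hsq x).ne'
  have second : ∀ f : Fin N → ℝ, Lop α Γ P f = 0 ↔
      ∃ φ : Fin N → ℝ, IsCollInv Γ φ ∧ ∀ i, f i = Real.sqrt (Rfun α P i) * φ i := by
    intro f
    rw [key_iff hα0 hα1 hΓ hP f]
    constructor
    · intro hci
      exact ⟨fun x => f x / Real.sqrt (Rfun α P x), hci,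
        fun i => by rw [mul_div_cancel₀ _ (hsq i).ne']⟩
    · rintro ⟨φ, hci, hf⟩
      have hfe : (fun x => f x / Real.sqrt (Rfun α P x)) = φ :=
        funext fun i => by rw [hf i, hcd]
      rw [hfe]; exact hci
  refine ⟨fun f => ?_, second⟩
  rw [key_iff hα0 hα1 hΓ hP f]
  constructor
  · intro hci
    obtain ⟨a, c, b, hab⟩ := hnorm _ hci
    have hf : f = a • (fun i => Real.sqrt (Rfun α P i))
        + c • (fun i => Real.sqrt (Rfun α P i) * ∑ m, (p i m) ^ 2)
        + ∑ m, b m • (fun i => Real.sqrt (Rfun α P i) * p i m) := by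
      funext i
      have h1 : f i = Real.sqrt (Rfun α P i) * (f i / Real.sqrt (Rfun α P i)) := by
        rw [mul_div_cancel₀ _ (hsq i).ne']
      rw [h1, hab i]
      simp only [Pi.add_apply, Pi.smul_apply, Finset.sum_apply, smul_eq_mul]
      rw [mul_add, mul_add, Finset.mul_sum]
      rw [Finset.sum_congr rfl fun m _ =>
        (by ring : Real.sqrt (Rfun α P i) * (b m * p i m)
          = b m * (Real.sqrt (Rfun α P i) * p i m))]
      ring
    rw [hf]
    refine Submodule.add_mem _ (Submodule.add_mem _ ?_ ?_) ?_
    · exact Submodule.smul_mem _ _ (Submodule.subset_span (Set.mem_insert _ _))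
    · exact Submodule.smul_mem _ _
        (Submodule.subset_span (Set.mem_insert_of_mem _ (Set.mem_insert _ _)))
    · exact Submodule.sum_mem _ fun m _ => Submodule.smul_mem _ _
        (Submodule.subset_span (Set.mem_insert_of_mem _ (Set.mem_insert_of_mem _ ⟨m, rfl⟩)))
  · intro hmem
    set W : Submodule ℝ (Fin N → ℝ) :=
      { carrier := {g | IsCollInv Γ fun x => g x / Real.sqrt (Rfun α P x)}
        add_mem' := by
          intro g h hg hh i j k l hne
          have h1 : g i / Real.sqrt (Rfun α P i) + g j / Real.sqrt (Rfun α P j)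
              = g k / Real.sqrt (Rfun α P k) + g l / Real.sqrt (Rfun α P l) :=
            hg i j k l hne
          have h2 : h i / Real.sqrt (Rfun α P i) + h j / Real.sqrt (Rfun α P j)
              = h k / Real.sqrt (Rfun α P k) + h l / Real.sqrt (Rfun α P l) :=
            hh i j k l hne
          show (g + h) i / Real.sqrt (Rfun α P i) + (g + h) j / Real.sqrt (Rfun α P j)
              = (g + h) k / Real.sqrt (Rfun α P k) + (g + h) l / Real.sqrt (Rfun α P l)
          simp only [Pi.add_apply, add_div]
          linarith
        zero_mem' := by
          intro i j k l hne
          simp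
        smul_mem' := by
          intro t g hg i j k l hne
          have h1 : g i / Real.sqrt (Rfun α P i) + g j / Real.sqrt (Rfun α P j)
              = g k / Real.sqrt (Rfun α P k) + g l / Real.sqrt (Rfun α P l) :=
            hg i j k l hne
          show (t • g) i / Real.sqrt (Rfun α P i) + (t • g) j / Real.sqrt (Rfun α P j)
              = (t • g) k / Real.sqrt (Rfun α P k) + (t • g) l / Real.sqrt (Rfun α P l)
          simp only [Pi.smul_apply, smul_eq_mul, mul_div_assoc]
          linear_combination t * h1 } with hW
    have hle : Submodule.span ℝ
        (insert (fun i => Real.sqrt (Rfun α P i))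
          (insert (fun i => Real.sqrt (Rfun α P i) * ∑ m, (p i m) ^ 2)
            (Set.range (fun m : Fin d => fun i => Real.sqrt (Rfun α P i) * p i m)))) ≤ W := by
      rw [Submodule.span_le]
      intro g hg
      simp only [Set.mem_insert_iff, Set.mem_range] at hg
      rcases hg with rfl | rfl | ⟨m, rfl⟩
      · intro i j k l hne
        show Real.sqrt (Rfun α P i) / Real.sqrt (Rfun α P i)
            + Real.sqrt (Rfun α P j) / Real.sqrt (Rfun α P j)
            = Real.sqrt (Rfun α P k) / Real.sqrt (Rfun α P k)
            + Real.sqrt (Rfun α P l) / Real.sqrt (Rfun α P l)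
        simp [div_self (hsq _).ne']
      · intro i j k l hne
        show Real.sqrt (Rfun α P i) * (∑ m, (p i m) ^ 2) / Real.sqrt (Rfun α P i)
            + Real.sqrt (Rfun α P j) * (∑ m, (p j m) ^ 2) / Real.sqrt (Rfun α P j)
            = Real.sqrt (Rfun α P k) * (∑ m, (p k m) ^ 2) / Real.sqrt (Rfun α P k)
            + Real.sqrt (Rfun α P l) * (∑ m, (p l m) ^ 2) / Real.sqrt (Rfun α P l)
        simp only [hcd]
        exact (hΓ.2.2.2 i j k l hne).2
      · intro i j k l hne
        show Real.sqrt (Rfun α P i) * p i m / Real.sqrt (Rfun α P i)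
            + Real.sqrt (Rfun α P j) * p j m / Real.sqrt (Rfun α P j)
            = Real.sqrt (Rfun α P k) * p k m / Real.sqrt (Rfun α P k)
            + Real.sqrt (Rfun α P l) * p l m / Real.sqrt (Rfun α P l)
        simp only [hcd]
        exact (hΓ.2.2.2 i j k l hne).1 m
    exact hle hmem
end final

/-- Proposition: the kernel of the linearized collision operator for
normal models. -/
theorem stmt19 {N d : ℕ} (hN : 0 < N) (hd : 0 < d)
    (α : ℝ) (hα0 : 0 < α) (hα1 : α < 1)
    (p : Fin N → Fin d → ℝ) (Γ : Fin N → Fin N → Fin N → Fin N → ℝ)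
    (hΓ : GammaOK p Γ) (hnorm : IsNormal p Γ)
    (P : Fin N → ℝ) (hP : IsEquilib α p P) :
    (∀ f : Fin N → ℝ, Lop α Γ P f = 0 ↔
      f ∈ Submodule.span ℝ
        (insert (fun i => Real.sqrt (Rfun α P i))
          (insert (fun i => Real.sqrt (Rfun α P i) * ∑ m, (p i m) ^ 2)
            (Set.range (fun m : Fin d => fun i => Real.sqrt (Rfun α P i) * p i m))))) ∧
    (∀ f : Fin N → ℝ, Lop α Γ P f = 0 ↔
      ∃ φ : Fin N → ℝ, IsCollInv Γ φ ∧ ∀ i, f i = Real.sqrt (Rfun α P i) * φ i) :=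
  stmt19' hN hd hα0 hα1 hΓ hnorm hP
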